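/- Let f_i(x) = xᵀA_i x + 2α_iᵀx + a_i (i = 1,…,r) and g_j(x) = xᵀB_j x + 2β_jᵀx + b_j (j = 1,…,s) be concave quadratic polynomials on ℝⁿ (so each A_i and each B_j is symmetric negative semidefinite), and set P_i = [[a_i, α_iᵀ],[α_i, A_i]] and Q_j = [[b_j, β_jᵀ],[β_j, B_j]]. Let K = {x ∈ ℝⁿ : f₁(x) ≥ 0, …, f_r(x) ≥ 0, g₁(x) > 0, …, g_s(x) > 0} and let K₁ = {x ∈ ℝⁿ : there exists a symmetric n×n matrix X such that M(x,X) = [[1, xᵀ],[x, X]] is positive semidefinite, ⟨P_i, M(x,X)⟩ ≥ 0 for all i, and ⟨Q_j, M(x,X)⟩ > 0 for all j}. Then K = K₁. -/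

import Mathlib

open Matrix

/-- The `(n+1) × (n+1)` block matrix `[[1, xᵀ], [x, X]]`. -/
def blockM {n : ℕ} (x : Fin n → ℝ) (X : Matrix (Fin n) (Fin n) ℝ) :
    Matrix (Unit ⊕ Fin n) (Unit ⊕ Fin n) ℝ :=
  Matrix.fromBlocks (Matrix.of fun _ _ => (1 : ℝ)) (Matrix.of fun _ j => x j)
    (Matrix.of fun i _ => x i) X

/-- The `(n+1) × (n+1)` block matrix `[[a, αᵀ], [α, A]]`. -/
def liftP {n : ℕ} (a : ℝ) (α : Fin n → ℝ) (A : Matrix (Fin n) (Fin n) ℝ) :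
    Matrix (Unit ⊕ Fin n) (Unit ⊕ Fin n) ℝ :=
  Matrix.fromBlocks (Matrix.of fun _ _ => a) (Matrix.of fun _ j => α j)
    (Matrix.of fun i _ => α i) A

/-- The trace inner product `⟨P, M⟩ = ∑ₖ ∑ₗ Pₖₗ Mₖₗ` of two real matrices. -/
def minner {ι : Type*} [Fintype ι] (P M : Matrix ι ι ℝ) : ℝ :=
  ∑ k, ∑ l, P k l * M k l

/-- A real matrix is negative semidefinite if it is symmetric and its quadratic
form is nonpositive. -/
def IsNegSemidef {ι : Type*} [Fintype ι] (A : Matrix ι ι ℝ) : Prop :=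
  A.IsSymm ∧ ∀ x : ι → ℝ, x ⬝ᵥ A.mulVec x ≤ 0

lemma quad_eq {n : ℕ} (A : Matrix (Fin n) (Fin n) ℝ) (x : Fin n → ℝ) :
    x ⬝ᵥ A.mulVec x = ∑ i, ∑ j, A i j * (x i * x j) := by
  simp only [dotProduct, mulVec, Finset.mul_sum]
  exact Finset.sum_congr rfl fun i _ => Finset.sum_congr rfl fun j _ => by ring

lemma minner_lift {n : ℕ} (a : ℝ) (α : Fin n → ℝ) (A : Matrix (Fin n) (Fin n) ℝ)
    (x : Fin n → ℝ) (X : Matrix (Fin n) (Fin n) ℝ) :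
    minner (liftP a α A) (blockM x X) = a + 2 * (α ⬝ᵥ x) + ∑ i, ∑ j, A i j * X i j := by
  simp only [minner, liftP, blockM, Fintype.sum_sum_type, Finset.univ_unique,
    Finset.sum_singleton, fromBlocks_apply₁₁, fromBlocks_apply₁₂, fromBlocks_apply₂₁,
    fromBlocks_apply₂₂, of_apply, dotProduct, Finset.sum_add_distrib]
  ring

open scoped MatrixOrder Matrix.Norms.L2Operator in
lemma sum_nsd_psd_nonpos {n : ℕ} {A Y : Matrix (Fin n) (Fin n) ℝ}
    (hA : IsNegSemidef A) (hY : Y.PosSemidef) : ∑ i, ∑ j, A i j * Y i j ≤ 0 := by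
  obtain ⟨C, hC⟩ := CStarAlgebra.nonneg_iff_eq_star_mul_self.mp hY.nonneg
  rw [star_eq_conjTranspose] at hC; subst hC
  have key : ∑ i, ∑ j, A i j * (Cᴴ * C) i j
      = ∑ k, (fun i => C k i) ⬝ᵥ A.mulVec (fun i => C k i) := by
    simp only [quad_eq, Matrix.mul_apply, conjTranspose_apply, star_trivial, Finset.mul_sum]
    have h1 : ∀ i : Fin n, ∑ j, ∑ k, A i j * (C k i * C k j)
        = ∑ k, ∑ j, A i j * (C k i * C k j) := fun i => Finset.sum_comm
    simp_rw [h1]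
    rw [Finset.sum_comm]
  rw [key]
  exact Finset.sum_nonpos fun k _ => hA.2 _

lemma blockM_quad {n : ℕ} (x : Fin n → ℝ) (X : Matrix (Fin n) (Fin n) ℝ)
    (t : ℝ) (z : Fin n → ℝ) :
    star (Sum.elim (fun _ : Unit => t) z) ⬝ᵥ (blockM x X).mulVec (Sum.elim (fun _ : Unit => t) z)
      = t * t + 2 * t * (x ⬝ᵥ z) + z ⬝ᵥ X.mulVec z := by
  simp only [blockM, star_trivial, dotProduct, mulVec, Fintype.sum_sum_type,
    Finset.univ_unique, Finset.sum_singleton, fromBlocks_apply₁₁, fromBlocks_apply₁₂,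
    fromBlocks_apply₂₁, fromBlocks_apply₂₂, of_apply, Sum.elim_inl, Sum.elim_inr,
    mul_add, Finset.mul_sum, Finset.sum_add_distrib]
  rw [← Finset.mul_sum, ← Finset.mul_sum]
  have e : ∑ i, t * z i * x i = t * ∑ i, x i * z i := by
    rw [Finset.mul_sum]; exact Finset.sum_congr rfl fun i _ => by ring
  ring_nf
  ring_nf at e
  rw [e]; ring

lemma outer_quad {n : ℕ} (x z : Fin n → ℝ) :
    z ⬝ᵥ (Matrix.of fun i j => x i * x j).mulVec z = (x ⬝ᵥ z) * (x ⬝ᵥ z) := by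
  simp only [dotProduct, mulVec, of_apply, Finset.mul_sum, Finset.sum_mul]
  rw [Finset.sum_comm]
  exact Finset.sum_congr rfl fun i _ => Finset.sum_congr rfl fun j _ => by ring

lemma blockM_outer_psd {n : ℕ} (x : Fin n → ℝ) :
    (blockM x (Matrix.of fun i j => x i * x j)).PosSemidef := by
  refine PosSemidef.of_dotProduct_mulVec_nonneg ?_ ?_
  · ext (i | i) (j | j) <;> simp [blockM, conjTranspose_apply, mul_comm]
  · intro v
    have hv : Sum.elim (fun _ : Unit => v (Sum.inl ())) (fun i => v (Sum.inr i)) = v := by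
      ext (i | i) <;> simp
    have h := blockM_quad x (Matrix.of fun i j => x i * x j) (v (Sum.inl ()))
      (fun i => v (Sum.inr i))
    rw [hv] at h
    rw [h, outer_quad]
    nlinarith [sq_nonneg (v (Sum.inl ()) + x ⬝ᵥ fun i => v (Sum.inr i))]

lemma schur {n : ℕ} {x : Fin n → ℝ} {X : Matrix (Fin n) (Fin n) ℝ}
    (hM : (blockM x X).PosSemidef) (z : Fin n → ℝ) :
    (x ⬝ᵥ z) * (x ⬝ᵥ z) ≤ z ⬝ᵥ X.mulVec z := by
  have h := hM.dotProduct_mulVec_nonneg (Sum.elim (fun _ : Unit => -(x ⬝ᵥ z)) z)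
  rw [blockM_quad] at h
  nlinarith

/-- For concave quadratic polynomials `fᵢ(x) = xᵀAᵢx + 2αᵢᵀx + aᵢ` and
`gⱼ(x) = xᵀBⱼx + 2βⱼᵀx + bⱼ`, the solution set `K` of
`fᵢ(x) ≥ 0, gⱼ(x) > 0` equals its linearization `K₁`. -/
theorem cq_linearization_eq (n r s : ℕ)
    (A : Fin r → Matrix (Fin n) (Fin n) ℝ) (α : Fin r → Fin n → ℝ) (a : Fin r → ℝ)
    (B : Fin s → Matrix (Fin n) (Fin n) ℝ) (β : Fin s → Fin n → ℝ) (b : Fin s → ℝ)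
    (hA : ∀ i, IsNegSemidef (A i)) (hB : ∀ j, IsNegSemidef (B j)) :
    {x : Fin n → ℝ |
        (∀ i, 0 ≤ x ⬝ᵥ (A i).mulVec x + 2 * (α i ⬝ᵥ x) + a i) ∧
        (∀ j, 0 < x ⬝ᵥ (B j).mulVec x + 2 * (β j ⬝ᵥ x) + b j)} =
      {x : Fin n → ℝ | ∃ X : Matrix (Fin n) (Fin n) ℝ, X.IsSymm ∧
          (blockM x X).PosSemidef ∧
          (∀ i, 0 ≤ minner (liftP (a i) (α i) (A i)) (blockM x X)) ∧
          (∀ j, 0 < minner (liftP (b j) (β j) (B j)) (blockM x X))} := by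
  ext x
  simp only [Set.mem_setOf_eq]
  constructor
  · rintro ⟨hf, hg⟩
    refine ⟨Matrix.of fun i j => x i * x j, ?_, blockM_outer_psd x, ?_, ?_⟩
    · ext i j; simp [Matrix.transpose_apply, mul_comm]
    · intro i
      rw [minner_lift]; simp only [of_apply]; rw [← quad_eq]
      have := hf i; linarith
    · intro j
      rw [minner_lift]; simp only [of_apply]; rw [← quad_eq]
      have := hg j; linarith
  · rintro ⟨X, hXs, hM, hfi, hgi⟩
    have hY : (X - Matrix.of fun i j => x i * x j).PosSemidef := by
      refine PosSemidef.of_dotProduct_mulVec_nonneg ?_ ?_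
      · ext i j
        have h1 := congrFun (congrFun hXs j) i
        simp only [conjTranspose_apply, Matrix.sub_apply, of_apply, star_trivial, transpose_apply] at h1 ⊢
        rw [h1]; ring
      · intro z
        have h1 := schur hM z
        simp only [star_trivial, sub_mulVec, dotProduct_sub, outer_quad]
        linarith
    have key : ∀ (C : Matrix (Fin n) (Fin n) ℝ), IsNegSemidef C →
        ∑ i, ∑ j, C i j * X i j ≤ x ⬝ᵥ C.mulVec x := by
      intro C hC
      have h := sum_nsd_psd_nonpos hC hY
      simp only [Matrix.sub_apply, of_apply, mul_sub, Finset.sum_sub_distrib] at h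
      rw [quad_eq]
      linarith
    constructor
    · intro i
      have h := hfi i
      rw [minner_lift] at h
      have h2 := key (A i) (hA i)
      linarith
    · intro j
      have h := hgi j
      rw [minner_lift] at h
      have h2 := key (B j) (hB j)
      linarith
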